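/- Let V be a finite-dimensional real inner product space equipped with a commutative bilinear product · satisfying (u·v|w) = (u·w|v) for all u,v,w, and suppose · is associative. Then there exist pairwise orthogonal nonzero vectors v₁,…,v_k ∈ V such that x·y = Σᵢ (vᵢ|x)(vᵢ|y) vᵢ for all x,y ∈ V. -/

import Mathlib

open scoped InnerProductSpace

universe u

private lemma exists_cube_root (c : ℝ) : ∃ t : ℝ, t ^ 3 = c := by
  have key : ∀ c : ℝ, 0 ≤ c → ∃ t : ℝ, t ^ 3 = c := by
    intro c hc
    refine ⟨c ^ ((3:ℝ)⁻¹), ?_⟩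
    rw [← Real.rpow_natCast (c ^ ((3:ℝ)⁻¹)) 3, ← Real.rpow_mul hc]
    norm_num
  rcases le_total 0 c with h | h
  · exact key c h
  · obtain ⟨t, ht⟩ := key (-c) (by linarith)
    exact ⟨-t, by rw [neg_pow, ht]; ring⟩

private def mulRes {V : Type u} [NormedAddCommGroup V] [InnerProductSpace ℝ V]
    (mul : V →ₗ[ℝ] V →ₗ[ℝ] V) (W : Submodule ℝ V)
    (h : ∀ ⦃x y : V⦄, x ∈ W → y ∈ W → mul x y ∈ W) : W →ₗ[ℝ] W →ₗ[ℝ] W :=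
  LinearMap.mk₂ ℝ (fun x y => ⟨mul x y, h x.2 y.2⟩)
    (fun m n p => Subtype.ext (by simp))
    (fun c m p => Subtype.ext (by simp))
    (fun m n p => Subtype.ext (by simp))
    (fun c m p => Subtype.ext (by simp))

private lemma mulRes_coe {V : Type u} [NormedAddCommGroup V] [InnerProductSpace ℝ V]
    (mul : V →ₗ[ℝ] V →ₗ[ℝ] V) (W : Submodule ℝ V)
    (h : ∀ ⦃x y : V⦄, x ∈ W → y ∈ W → mul x y ∈ W) (x y : W) :
    (mulRes mul W h x y : V) = mul (x : V) (y : V) := rfl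

private theorem aux (n : ℕ) : ∀ (V : Type u) [NormedAddCommGroup V] [InnerProductSpace ℝ V]
    [FiniteDimensional ℝ V], Module.finrank ℝ V ≤ n →
    ∀ (mul : V →ₗ[ℝ] V →ₗ[ℝ] V),
    (∀ u v : V, mul u v = mul v u) →
    (∀ u v w : V, ⟪mul u v, w⟫_ℝ = ⟪mul u w, v⟫_ℝ) →
    (∀ x y z : V, mul x (mul y z) = mul (mul x y) z) →
    ∃ (k : ℕ) (v : Fin k → V),
      (∀ i, v i ≠ 0) ∧
      (∀ i j, i ≠ j → ⟪v i, v j⟫_ℝ = 0) ∧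
      (∀ x y : V, mul x y = ∑ i, (⟪v i, x⟫_ℝ * ⟪v i, y⟫_ℝ) • v i) := by
  induction n with
  | zero =>
    intro V _ _ _ hrank mul hcomm hcompat hassoc
    have hsub : Subsingleton V := by
      rw [← Module.finrank_zero_iff (R := ℝ)]
      omega
    exact ⟨0, fun i => i.elim0, fun i => i.elim0, fun i => i.elim0,
      fun x y => by simp; exact Subsingleton.elim _ _⟩
  | succ n IH =>
    intro V _ _ _ hrank mul hcomm hcompat hassoc
    by_cases hscal : ∀ u : V, ∃ μ : ℝ, ∀ x, mul u x = μ • x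
    · -- every multiplication operator is scalar
      by_cases hzero : ∀ x y : V, mul x y = 0
      · exact ⟨0, fun i => i.elim0, fun i => i.elim0, fun i => i.elim0,
          fun x y => by simp [hzero]⟩
      · push_neg at hzero
        obtain ⟨u0, x0, h0⟩ := hzero
        obtain ⟨μ, hμ⟩ := hscal u0
        have hμ0 : μ ≠ 0 := by
          intro h; exact h0 (by rw [hμ, h, zero_smul])
        have hu0 : u0 ≠ 0 := by
          rintro rfl; exact h0 (by simp)
        obtain ⟨e, he⟩ : ∃ e : V, e = ‖u0‖⁻¹ • u0 := ⟨_, rfl⟩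
        have hne : ‖e‖ = 1 := by rw [he]; exact norm_smul_inv_norm hu0
        have hee : ⟪e, e⟫_ℝ = 1 := by
          rw [real_inner_self_eq_norm_mul_norm, hne]; norm_num
        have he0 : e ≠ 0 := by
          intro h; rw [h, norm_zero] at hne; norm_num at hne
        have hrepr : ∀ x : V, x = ⟪e, x⟫_ℝ • e := by
          intro x
          obtain ⟨ν, hν⟩ := hscal x
          have h3 : μ • x = ν • u0 := by rw [← hμ x, hcomm, hν u0]
          have h4 : x = (μ⁻¹ * ν) • u0 := by
            calc x = μ⁻¹ • μ • x := by rw [smul_smul, inv_mul_cancel₀ hμ0, one_smul]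
              _ = μ⁻¹ • ν • u0 := by rw [h3]
              _ = (μ⁻¹ * ν) • u0 := by rw [smul_smul]
          have hx : x = (μ⁻¹ * ν * ‖u0‖) • e := by
            rw [he, smul_smul, h4]
            congr 1
            have : ‖u0‖ ≠ 0 := norm_ne_zero_iff.mpr hu0
            field_simp
          rw [hx, real_inner_smul_right, hee, mul_one]
        have hc : mul e e = (μ * ‖u0‖⁻¹) • e := by
          rw [he, LinearMap.map_smul₂, map_smul, hμ u0, smul_smul, smul_smul, smul_smul]
          congr 1
          ring
        have hc0 : μ * ‖u0‖⁻¹ ≠ 0 :=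
          mul_ne_zero hμ0 (inv_ne_zero (norm_ne_zero_iff.mpr hu0))
        obtain ⟨t, ht⟩ := exists_cube_root (μ * ‖u0‖⁻¹)
        have ht0 : t ≠ 0 := by
          intro h; rw [h] at ht; exact hc0 (by simpa using ht.symm)
        refine ⟨1, fun _ => t • e, fun i => smul_ne_zero ht0 he0,
          fun i j hij => absurd (Subsingleton.elim i j) hij, ?_⟩
        intro x y
        conv_lhs => rw [hrepr x, hrepr y]
        rw [LinearMap.map_smul₂, map_smul, hc]
        rw [Fin.sum_univ_one]
        rw [real_inner_smul_left, real_inner_smul_left]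
        simp only [smul_smul]
        congr 1
        rw [← ht]; ring
    · -- some multiplication operator is not scalar
      push_neg at hscal
      obtain ⟨u, hu⟩ := hscal
      have hsym : (mul u).IsSymmetric := fun x y => by
        rw [hcompat u x y, real_inner_comm]
      have htop : (⨆ μ, Module.End.eigenspace (mul u) μ) = ⊤ :=
        Submodule.orthogonal_eq_bot_iff.mp hsym.orthogonalComplement_iSup_eigenspaces_eq_bot
      have hex : ∃ μ, Module.End.eigenspace (mul u) μ ≠ ⊥ := by
        by_contra h
        push_neg at h
        have hbot : (⊤ : Submodule ℝ V) = ⊥ := by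
          rw [← htop]; simp [h]
        obtain ⟨x, hx⟩ := hu 0
        apply hx
        have hx0 : x = 0 := by
          have : x ∈ (⊥ : Submodule ℝ V) := hbot ▸ Submodule.mem_top
          simpa using this
        rw [hx0]; simp
      obtain ⟨μ, hEbot⟩ := hex
      set E := Module.End.eigenspace (mul u) μ with hE
      have hEtop : E ≠ ⊤ := by
        intro h
        obtain ⟨x, hx⟩ := hu μ
        exact hx (Module.End.mem_eigenspace_iff.mp (h ▸ Submodule.mem_top : x ∈ E))
      have hmemE : ∀ {z : V}, z ∈ E → mul u z = μ • z :=
        fun hz => Module.End.mem_eigenspace_iff.mp hz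
      have hIdeal : ∀ (v z : V), z ∈ E → mul v z ∈ E := by
        intro v z hz
        rw [hE, Module.End.mem_eigenspace_iff]
        calc mul u (mul v z) = mul (mul u v) z := hassoc u v z
          _ = mul (mul v u) z := by rw [hcomm u v]
          _ = mul v (mul u z) := (hassoc v u z).symm
          _ = mul v (μ • z) := by rw [hmemE hz]
          _ = μ • mul v z := by rw [map_smul]
      have hIdealP : ∀ (v y : V), y ∈ Eᗮ → mul v y ∈ Eᗮ := by
        intro v y hy
        rw [Submodule.mem_orthogonal]
        intro z hz
        rw [real_inner_comm, hcompat v y z]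
        exact (Submodule.mem_orthogonal E y).mp hy _ (hIdeal v z hz)
      have hcross : ∀ x y : V, x ∈ E → y ∈ Eᗮ → mul x y = 0 := by
        intro x y hx hy
        have h1 : mul x y ∈ E := by rw [hcomm]; exact hIdeal y x hx
        have h2 : mul x y ∈ Eᗮ := hIdealP x y hy
        simpa using (E.orthogonal_disjoint).le_bot ⟨h1, h2⟩
      have hsum : Module.finrank ℝ E + Module.finrank ℝ Eᗮ = Module.finrank ℝ V :=
        Submodule.finrank_add_finrank_orthogonal E
      have hE1 : Module.finrank ℝ E ≠ 0 := by
        rw [ne_eq, Submodule.finrank_eq_zero]; exact hEbot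
      have hP1 : Module.finrank ℝ Eᗮ ≠ 0 := by
        rw [ne_eq, Submodule.finrank_eq_zero, Submodule.orthogonal_eq_bot_iff]
        exact hEtop
      have hclE : ∀ ⦃x y : V⦄, x ∈ E → y ∈ E → mul x y ∈ E :=
        fun x y _ hy => hIdeal x y hy
      have hclP : ∀ ⦃x y : V⦄, x ∈ Eᗮ → y ∈ Eᗮ → mul x y ∈ Eᗮ :=
        fun x y _ hy => hIdealP x y hy
      obtain ⟨k₁, w, hw0, hworth, hwmul⟩ :=
        IH E (by omega) (mulRes mul E hclE)
          (fun a b => Subtype.ext (hcomm a b))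
          (fun a b c => hcompat a b c)
          (fun a b c => Subtype.ext (hassoc a b c))
      obtain ⟨k₂, w', hw0', hworth', hwmul'⟩ :=
        IH Eᗮ (by omega) (mulRes mul Eᗮ hclP)
          (fun a b => Subtype.ext (hcomm a b))
          (fun a b c => hcompat a b c)
          (fun a b c => Subtype.ext (hassoc a b c))
      refine ⟨k₁ + k₂, Fin.append (fun i => (w i : V)) (fun i => (w' i : V)), ?_, ?_, ?_⟩
      · intro i
        induction i using Fin.addCases with
        | left i' => rw [Fin.append_left]; simpa using hw0 i'
        | right i' => rw [Fin.append_right]; simpa using hw0' i'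
      · intro i j
        induction i using Fin.addCases with
        | left i' =>
          induction j using Fin.addCases with
          | left j' =>
            intro hij
            rw [Fin.append_left, Fin.append_left]
            exact hworth i' j' (fun h => hij (by rw [h]))
          | right j' =>
            intro _
            rw [Fin.append_left, Fin.append_right]
            exact (Submodule.mem_orthogonal E _).mp (w' j').2 _ (w i').2
        | right i' =>
          induction j using Fin.addCases with
          | left j' =>
            intro _
            rw [Fin.append_right, Fin.append_left]
            rw [real_inner_comm]
            exact (Submodule.mem_orthogonal E _).mp (w' i').2 _ (w j').2
          | right j' =>
            intro hij
            rw [Fin.append_right, Fin.append_right]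
            exact hworth' i' j' (fun h => hij (by rw [h]))
      · intro x y
        have hinnerE : ∀ (a : E) (z : V), ⟪(a : V), (Submodule.orthogonalProjection E z : V)⟫_ℝ = ⟪(a : V), z⟫_ℝ := by
          intro a z
          have h := Submodule.sub_starProjection_mem_orthogonal (K := E) z
          have h2 : ⟪(a : V), z - (Submodule.orthogonalProjection E z : V)⟫_ℝ = 0 :=
            (Submodule.mem_orthogonal E _).mp h _ a.2
          rw [inner_sub_right] at h2
          linarith
        set px : V := (Submodule.orthogonalProjection E x : V) with hpx
        set py : V := (Submodule.orthogonalProjection E y : V) with hpy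
        have hx' : x - px ∈ Eᗮ := Submodule.sub_starProjection_mem_orthogonal x
        have hy' : y - py ∈ Eᗮ := Submodule.sub_starProjection_mem_orthogonal y
        have hxE : px ∈ E := (Submodule.orthogonalProjection E x).2
        have hyE : py ∈ E := (Submodule.orthogonalProjection E y).2
        have hdecomp : mul x y = mul px py + mul (x - px) (y - py) := by
          have e1 : mul px (y - py) = 0 := hcross _ _ hxE hy'
          have e2 : mul (x - px) py = 0 := by rw [hcomm]; exact hcross _ _ hyE hx'
          calc mul x y = mul (px + (x - px)) (py + (y - py)) := by
                rw [add_sub_cancel, add_sub_cancel]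
            _ = mul px py + mul px (y - py) + (mul (x - px) py + mul (x - px) (y - py)) := by
                simp only [map_add, LinearMap.add_apply]
                abel
            _ = mul px py + mul (x - px) (y - py) := by rw [e1, e2]; abel
        have hinnerP : ∀ (a : Eᗮ) (z : V) (hz : z ∈ E), ⟪(a : V), z⟫_ℝ = 0 := by
          intro a z hz
          rw [real_inner_comm]
          exact (Submodule.mem_orthogonal E _).mp a.2 _ hz
        have hpart1 : mul px py =
            ∑ i : Fin k₁, (⟪(w i : V), x⟫_ℝ * ⟪(w i : V), y⟫_ℝ) • (w i : V) := by
          have h := congrArg (Subtype.val) (hwmul (Submodule.orthogonalProjection E x) (Submodule.orthogonalProjection E y))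
          rw [mulRes_coe] at h
          rw [← hpx, ← hpy] at h
          rw [h]
          push_cast
          refine Finset.sum_congr rfl (fun i _ => ?_)
          congr 1
          rw [Submodule.coe_inner, Submodule.coe_inner, ← hpx, ← hpy, hinnerE, hinnerE]
        have hpart2 : mul (x - px) (y - py) =
            ∑ i : Fin k₂, (⟪(w' i : V), x⟫_ℝ * ⟪(w' i : V), y⟫_ℝ) • (w' i : V) := by
          have h := congrArg (Subtype.val) (hwmul' ⟨x - px, hx'⟩ ⟨y - py, hy'⟩)
          rw [mulRes_coe] at h
          rw [h]
          push_cast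
          refine Finset.sum_congr rfl (fun i _ => ?_)
          congr 1
          rw [Submodule.coe_inner, Submodule.coe_inner]
          simp only [inner_sub_right]
          rw [hinnerP (w' i) px hxE, hinnerP (w' i) py hyE]
          ring
        rw [hdecomp, hpart1, hpart2, Fin.sum_univ_add]
        congr 1
        · refine Finset.sum_congr rfl (fun i _ => ?_)
          rw [Fin.append_left]
        · refine Finset.sum_congr rfl (fun i _ => ?_)
          rw [Fin.append_right]

theorem stmt_3 {V : Type*} [NormedAddCommGroup V] [InnerProductSpace ℝ V]
    [FiniteDimensional ℝ V]
    (mul : V →ₗ[ℝ] V →ₗ[ℝ] V)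
    (hcomm : ∀ u v : V, mul u v = mul v u)
    (hcompat : ∀ u v w : V, ⟪mul u v, w⟫_ℝ = ⟪mul u w, v⟫_ℝ)
    (hassoc : ∀ x y z : V, mul x (mul y z) = mul (mul x y) z) :
    ∃ (k : ℕ) (v : Fin k → V),
      (∀ i, v i ≠ 0) ∧
      (∀ i j, i ≠ j → ⟪v i, v j⟫_ℝ = 0) ∧
      (∀ x y : V, mul x y = ∑ i, (⟪v i, x⟫_ℝ * ⟪v i, y⟫_ℝ) • v i) := by
  exact aux (Module.finrank ℝ V) V le_rfl mul hcomm hcompat hassoc
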